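/- The K-algebra K[t,s]/(t^4, t^3 − ts, s^2) is isomorphic to the monomial algebra K[z,w]/(z^4, zw, w^2), via the change of variables z = t, w = s − t². -/

import Mathlib

open MvPolynomial

/-- `K[t,s]/(t⁴, t³ − ts, s²) ≅ K[z,w]/(z⁴, zw, w²)` via `z = t`, `w = s − t²`
(here `t = X 0`, `s = X 1` and `z = X 0`, `w = X 1`). -/
theorem stmt_13 (K : Type*) [Field K] [CharZero K]
    (J1 J2 : Ideal (MvPolynomial (Fin 2) K))
    (hJ1 : J1 = Ideal.span {X 0 ^ 4, X 0 * X 1, X 1 ^ 2})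
    (hJ2 : J2 = Ideal.span {X 0 ^ 4, X 0 ^ 3 - X 0 * X 1, X 1 ^ 2}) :
    ∃ φ : (MvPolynomial (Fin 2) K ⧸ J1) ≃ₐ[K] (MvPolynomial (Fin 2) K ⧸ J2),
      φ (Ideal.Quotient.mk J1 (X 0)) = Ideal.Quotient.mk J2 (X 0) ∧
      φ (Ideal.Quotient.mk J1 (X 1)) = Ideal.Quotient.mk J2 (X 1 - X 0 ^ 2) := by
  have h24 : (X 0 : MvPolynomial (Fin 2) K) ^ 4 ∈ J2 := by
    rw [hJ2]; exact Ideal.subset_span (by simp)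
  have h2m : (X 0 : MvPolynomial (Fin 2) K) ^ 3 - X 0 * X 1 ∈ J2 := by
    rw [hJ2]; exact Ideal.subset_span (by simp)
  have h2s : (X 1 : MvPolynomial (Fin 2) K) ^ 2 ∈ J2 := by
    rw [hJ2]; exact Ideal.subset_span (by simp)
  have h14 : (X 0 : MvPolynomial (Fin 2) K) ^ 4 ∈ J1 := by
    rw [hJ1]; exact Ideal.subset_span (by simp)
  have h1m : (X 0 : MvPolynomial (Fin 2) K) * X 1 ∈ J1 := by
    rw [hJ1]; exact Ideal.subset_span (by simp)
  have h1s : (X 1 : MvPolynomial (Fin 2) K) ^ 2 ∈ J1 := by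
    rw [hJ1]; exact Ideal.subset_span (by simp)
  have h2sq : (X 0 : MvPolynomial (Fin 2) K) ^ 2 * X 1 ∈ J2 := by
    have : (X 0 : MvPolynomial (Fin 2) K) ^ 2 * X 1
        = X 0 ^ 4 - X 0 * (X 0 ^ 3 - X 0 * X 1) := by ring
    rw [this]
    exact J2.sub_mem h24 (J2.mul_mem_left _ h2m)
  set F : MvPolynomial (Fin 2) K →ₐ[K] MvPolynomial (Fin 2) K ⧸ J2 :=
    (Ideal.Quotient.mkₐ K J2).comp (aeval ![X 0, X 1 - X 0 ^ 2]) with hF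
  set G : MvPolynomial (Fin 2) K →ₐ[K] MvPolynomial (Fin 2) K ⧸ J1 :=
    (Ideal.Quotient.mkₐ K J1).comp (aeval ![X 0, X 1 + X 0 ^ 2]) with hG
  have hFmk : ∀ p, F p = Ideal.Quotient.mk J2 (aeval ![X 0, X 1 - X 0 ^ 2] p) :=
    fun p => rfl
  have hGmk : ∀ p, G p = Ideal.Quotient.mk J1 (aeval ![X 0, X 1 + X 0 ^ 2] p) :=
    fun p => rfl
  have hFJ : ∀ a ∈ J1, F a = 0 := by
    rw [hJ1]
    intro a ha
    rw [← RingHom.mem_ker]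
    refine Ideal.span_le.mpr ?_ ha
    intro b hb
    rw [SetLike.mem_coe, RingHom.mem_ker]
    simp only [Set.mem_insert_iff, Set.mem_singleton_iff] at hb
    rcases hb with rfl | rfl | rfl <;>
        rw [hFmk, Ideal.Quotient.eq_zero_iff_mem] <;>
        simp only [map_pow, map_mul, map_sub, map_add, aeval_X,
          Matrix.cons_val_zero, Matrix.cons_val_one, Matrix.head_cons]
    · exact h24
    · have : (X 0 : MvPolynomial (Fin 2) K) * (X 1 - X 0 ^ 2)
          = -(X 0 ^ 3 - X 0 * X 1) := by ring
      rw [this]; exact J2.neg_mem h2m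
    · have : ((X 1 : MvPolynomial (Fin 2) K) - X 0 ^ 2) ^ 2
          = X 1 ^ 2 + X 0 ^ 4 - 2 * (X 0 ^ 2 * X 1) := by ring
      rw [this]
      exact J2.sub_mem (J2.add_mem h2s h24) (J2.mul_mem_left _ h2sq)
  have hGJ : ∀ a ∈ J2, G a = 0 := by
    rw [hJ2]
    intro a ha
    rw [← RingHom.mem_ker]
    refine Ideal.span_le.mpr ?_ ha
    intro b hb
    rw [SetLike.mem_coe, RingHom.mem_ker]
    simp only [Set.mem_insert_iff, Set.mem_singleton_iff] at hb
    rcases hb with rfl | rfl | rfl <;>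
        rw [hGmk, Ideal.Quotient.eq_zero_iff_mem] <;>
        simp only [map_pow, map_mul, map_sub, map_add, aeval_X,
          Matrix.cons_val_zero, Matrix.cons_val_one, Matrix.head_cons]
    · exact h14
    · have : (X 0 : MvPolynomial (Fin 2) K) ^ 3 - X 0 * (X 1 + X 0 ^ 2)
          = -(X 0 * X 1) := by ring
      rw [this]; exact J1.neg_mem h1m
    · have : ((X 1 : MvPolynomial (Fin 2) K) + X 0 ^ 2) ^ 2
          = X 1 ^ 2 + X 0 ^ 4 + 2 * (X 0 * (X 0 * X 1)) := by ring
      rw [this]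
      exact J1.add_mem (J1.add_mem h1s h14) (J1.mul_mem_left _ (J1.mul_mem_left _ h1m))
  set F' : MvPolynomial (Fin 2) K ⧸ J1 →ₐ[K] MvPolynomial (Fin 2) K ⧸ J2 :=
    Ideal.Quotient.liftₐ J1 F hFJ with hF'
  set G' : MvPolynomial (Fin 2) K ⧸ J2 →ₐ[K] MvPolynomial (Fin 2) K ⧸ J1 :=
    Ideal.Quotient.liftₐ J2 G hGJ with hG'
  have hF'mk : ∀ p, F' (Ideal.Quotient.mk J1 p)
      = Ideal.Quotient.mk J2 (aeval ![X 0, X 1 - X 0 ^ 2] p) := by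
    intro p
    simp [hF', hF, Ideal.Quotient.liftₐ_apply]
    exact hFmk p
  have hG'mk : ∀ p, G' (Ideal.Quotient.mk J2 p)
      = Ideal.Quotient.mk J1 (aeval ![X 0, X 1 + X 0 ^ 2] p) := by
    intro p
    simp [hG', hG, Ideal.Quotient.liftₐ_apply]
    exact hGmk p
  refine ⟨AlgEquiv.ofAlgHom F' G' ?_ ?_, ?_, ?_⟩
  · apply Ideal.Quotient.algHom_ext
    apply MvPolynomial.algHom_ext
    intro i
    fin_cases i <;>
      · simp only [AlgHom.comp_apply, Ideal.Quotient.mkₐ_eq_mk, AlgHom.id_apply,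
          Fin.zero_eta, Fin.mk_one, Fin.isValue]
        rw [hG'mk, hF'mk]
        congr 1
        simp only [map_add, map_sub, map_pow, aeval_X, Matrix.cons_val_zero,
          Matrix.cons_val_one, Matrix.head_cons]
        try ring
  · apply Ideal.Quotient.algHom_ext
    apply MvPolynomial.algHom_ext
    intro i
    fin_cases i <;>
      · simp only [AlgHom.comp_apply, Ideal.Quotient.mkₐ_eq_mk, AlgHom.id_apply,
          Fin.zero_eta, Fin.mk_one, Fin.isValue]
        rw [hF'mk, hG'mk]
        congr 1
        simp only [map_add, map_sub, map_pow, aeval_X, Matrix.cons_val_zero,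
          Matrix.cons_val_one, Matrix.head_cons]
        try ring
  · rw [AlgEquiv.ofAlgHom_apply, hF'mk]
    congr 1
    simp
  · rw [AlgEquiv.ofAlgHom_apply, hF'mk]
    congr 1
    simp
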